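/- If M is a d×d matrix all of whose eigenvalues have strictly negative real part, then for every symmetric positive semidefinite matrix U the Lyapunov equation U + M V + V M^T = 0 has the unique solution V = ∫_0^∞ e^{Mt} U e^{M^T t} dt, and this V is symmetric positive semidefinite. -/

import Mathlib

open Matrix

open NormedSpace Set Filter MeasureTheory

lemma pow_mul_exp_le_aux (k : ℕ) {ε : ℝ} (hε : 0 < ε) {t : ℝ} (ht : 0 ≤ t) :
    t ^ k * Real.exp (-(2*ε)*t) ≤ ((k.factorial : ℝ) / ε ^ k) * Real.exp (-ε*t) := by
  have h1 : (ε*t)^k / (k.factorial : ℝ) ≤ Real.exp (ε*t) := by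
    calc (ε*t)^k / (k.factorial : ℝ)
        ≤ ∑ i ∈ Finset.range (k+1), (ε*t)^i / (i.factorial : ℝ) := by
          exact Finset.single_le_sum (f := fun i => (ε*t)^i / (i.factorial : ℝ)) (fun i _ => by positivity) (Finset.self_mem_range_succ k)
      _ ≤ Real.exp (ε*t) := Real.sum_le_exp_of_nonneg (by positivity) _
  have h2 : t ^ k ≤ ((k.factorial : ℝ) / ε ^ k) * Real.exp (ε*t) := by
    have hf : (0:ℝ) < (k.factorial : ℝ) := by positivity
    rw [div_le_iff₀ hf, mul_pow] at h1
    calc t ^ k = (ε ^ k * t ^ k) / ε ^ k := by field_simp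
      _ ≤ (Real.exp (ε*t) * k.factorial) / ε ^ k := by
          apply div_le_div_of_nonneg_right h1 (by positivity) |>.trans_eq rfl
      _ = ((k.factorial : ℝ) / ε ^ k) * Real.exp (ε*t) := by ring
  calc t ^ k * Real.exp (-(2*ε)*t)
      ≤ (((k.factorial : ℝ) / ε ^ k) * Real.exp (ε*t)) * Real.exp (-(2*ε)*t) := by
        apply mul_le_mul_of_nonneg_right h2 (Real.exp_nonneg _)
    _ = ((k.factorial : ℝ) / ε ^ k) * Real.exp (-ε*t) := by
        rw [mul_assoc, ← Real.exp_add]; ring_nf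

lemma exists_eps_of_hurwitz {d : ℕ} (A : Matrix (Fin d) (Fin d) ℂ)
    (h : ∀ μ ∈ spectrum ℂ A, μ.re < 0) :
    ∃ ε : ℝ, 0 < ε ∧ ∀ μ ∈ spectrum ℂ A, μ.re ≤ -(2*ε) := by
  have hfin : (spectrum ℂ A).Finite := A.finite_spectrum
  set s : Finset ℝ := hfin.toFinset.image Complex.re with hs
  rcases s.eq_empty_or_nonempty with he | hne
  · refine ⟨1, one_pos, fun μ hμ => absurd ?_ (Finset.eq_empty_iff_forall_notMem.mp he μ.re)⟩
    exact Finset.mem_image_of_mem _ (hfin.mem_toFinset.mpr hμ)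
  · set r := s.max' hne with hr
    have hrneg : r < 0 := by
      obtain ⟨μ, hμ, hμr⟩ := Finset.mem_image.mp (s.max'_mem hne)
      rw [hr, ← hμr]; exact h μ (hfin.mem_toFinset.mp hμ)
    refine ⟨-r/2, by linarith, fun μ hμ => ?_⟩
    have : μ.re ≤ r := s.le_max' _ (Finset.mem_image_of_mem _ (hfin.mem_toFinset.mpr hμ))
    linarith

lemma vec_decay_single {d : ℕ} (A : Matrix (Fin d) (Fin d) ℂ) {ε : ℝ} (hε : 0 < ε)
    {μ : ℂ} (hμ : μ.re ≤ -(2*ε)) {v : Fin d → ℂ}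
    (hv : v ∈ Module.End.maxGenEigenspace (Matrix.toLinAlgEquiv' A : Module.End ℂ (Fin d → ℂ)) μ) :
    ∃ C : ℝ, 0 ≤ C ∧ ∀ t : ℝ, 0 ≤ t → ‖exp (t • A) *ᵥ v‖ ≤ C * Real.exp (-ε * t) := by
  letI : SeminormedRing (Matrix (Fin d) (Fin d) ℂ) := Matrix.linftyOpSemiNormedRing
  letI : NormedRing (Matrix (Fin d) (Fin d) ℂ) := Matrix.linftyOpNormedRing
  letI : NormedAlgebra ℂ (Matrix (Fin d) (Fin d) ℂ) := Matrix.linftyOpNormedAlgebra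
  letI : NormedAlgebra ℚ (Matrix (Fin d) (Fin d) ℂ) := Matrix.linftyOpNormedAlgebra
  obtain ⟨m, hm⟩ := (Module.End.mem_maxGenEigenspace _ _ _).mp hv
  set N : Matrix (Fin d) (Fin d) ℂ := A - μ • 1 with hN
  have hNm : N ^ m *ᵥ v = 0 := by
    have h1 : Matrix.toLinAlgEquiv' N = Matrix.toLinAlgEquiv' A - μ • 1 := by
      rw [hN, map_sub, _root_.map_smul, _root_.map_one]
    have h2 : (Matrix.toLinAlgEquiv' (N ^ m)) v = 0 := by
      rw [map_pow, h1]; exact hm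
    rwa [Matrix.toLinAlgEquiv'_apply] at h2
  have hNn : ∀ n : ℕ, m ≤ n → N ^ n *ᵥ v = 0 := by
    intro n hn
    have : N ^ n = N ^ (n - m) * N ^ m := by rw [← pow_add]; congr 1; omega
    rw [this, ← Matrix.mulVec_mulVec, hNm, Matrix.mulVec_zero]
  -- the continuous linear map B ↦ B *ᵥ v
  set L : Matrix (Fin d) (Fin d) ℂ →L[ℂ] (Fin d → ℂ) :=
    LinearMap.toContinuousLinearMap
      ((LinearMap.applyₗ (R := ℂ) v).comp (Matrix.toLinAlgEquiv' (n := Fin d) (R := ℂ)).toLinearMap)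
    with hLdef
  have hL : ∀ B : Matrix (Fin d) (Fin d) ℂ, L B = B *ᵥ v := by
    intro B
    simp [hLdef, Matrix.toLinAlgEquiv'_apply]
  have key : ∀ t : ℝ, exp (t • A) *ᵥ v =
      Complex.exp ((t:ℂ) * μ) •
        ∑ k ∈ Finset.range m, (((k.factorial : ℂ))⁻¹ * (t:ℂ)^k) • (N ^ k *ᵥ v) := by
    intro t
    have hts : t • A = (t:ℂ) • A := by
      rw [← Complex.coe_algebraMap, algebraMap_smul]
    have hA : t • A = ((t:ℂ) * μ) • (1 : Matrix (Fin d) (Fin d) ℂ) + (t:ℂ) • N := by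
      rw [hts, hN, smul_sub, smul_smul]
      abel
    have hcomm : Commute (((t:ℂ)*μ) • (1 : Matrix (Fin d) (Fin d) ℂ)) ((t:ℂ) • N) :=
      ((Commute.one_left N).smul_left _).smul_right _
    have h1 : exp (((t:ℂ)*μ) • (1 : Matrix (Fin d) (Fin d) ℂ))
        = Complex.exp ((t:ℂ)*μ) • 1 := by
      rw [← Algebra.algebraMap_eq_smul_one, ← Algebra.algebraMap_eq_smul_one,
        Complex.exp_eq_exp_ℂ, algebraMap_exp_comm]
      rfl
    have h2 : exp ((t:ℂ) • N) *ᵥ v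
        = ∑ k ∈ Finset.range m, (((k.factorial : ℂ))⁻¹ * (t:ℂ)^k) • (N ^ k *ᵥ v) := by
      rw [← hL, exp_eq_tsum ℂ]
      rw [ContinuousLinearMap.map_tsum L (expSeries_summable' (𝕂 := ℂ) ((t:ℂ) • N))]
      have hterm : ∀ n : ℕ, L ((n.factorial : ℂ)⁻¹ • ((t:ℂ) • N) ^ n)
          = (((n.factorial : ℂ))⁻¹ * (t:ℂ)^n) • (N ^ n *ᵥ v) := by
        intro n
        rw [_root_.map_smul, hL, smul_pow, Matrix.smul_mulVec, smul_smul]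
      rw [tsum_congr hterm]
      refine tsum_eq_sum ?_
      intro n hn
      rw [hNn n (Nat.le_of_not_lt (fun h => hn (Finset.mem_range.mpr h))), smul_zero]
    rw [hA]
    erw [NormedSpace.exp_add_of_commute hcomm]
    erw [h1]
    rw [Matrix.smul_mul, Matrix.one_mul,
      Matrix.smul_mulVec]
    erw [h2]
  refine ⟨∑ k ∈ Finset.range m, ε⁻¹ ^ k * ‖N ^ k *ᵥ v‖,
    Finset.sum_nonneg fun k _ => by positivity, fun t ht => ?_⟩
  rw [key t, norm_smul]
  have hnorme : ‖Complex.exp ((t:ℂ) * μ)‖ = Real.exp (t * μ.re) := by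
    rw [Complex.norm_exp]
    congr 1
    simp [Complex.mul_re]
  have hsum : ‖∑ k ∈ Finset.range m, (((k.factorial : ℂ))⁻¹ * (t:ℂ)^k) • (N ^ k *ᵥ v)‖
      ≤ ∑ k ∈ Finset.range m, (k.factorial : ℝ)⁻¹ * t^k * ‖N ^ k *ᵥ v‖ := by
    refine (norm_sum_le _ _).trans (Finset.sum_le_sum fun k _ => ?_)
    rw [norm_smul, norm_mul, norm_inv, norm_pow, Complex.norm_natCast, Complex.norm_real,
      Real.norm_eq_abs, abs_of_nonneg ht, mul_assoc]
  calc ‖Complex.exp ((t:ℂ) * μ)‖ * ‖∑ k ∈ Finset.range m, (((k.factorial : ℂ))⁻¹ * (t:ℂ)^k) • (N ^ k *ᵥ v)‖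
      ≤ Real.exp (-(2*ε)*t) * ∑ k ∈ Finset.range m, (k.factorial : ℝ)⁻¹ * t^k * ‖N ^ k *ᵥ v‖ := by
        refine mul_le_mul ?_ hsum (norm_nonneg _) (Real.exp_nonneg _)
        rw [hnorme]
        exact Real.exp_le_exp.mpr (by nlinarith [mul_le_mul_of_nonneg_left hμ ht])
    _ ≤ ∑ k ∈ Finset.range m, ε⁻¹ ^ k * ‖N ^ k *ᵥ v‖ * Real.exp (-ε * t) := by
        rw [Finset.mul_sum]
        refine Finset.sum_le_sum fun k _ => ?_
        have h3 := pow_mul_exp_le_aux k hε ht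
        have hk : (0:ℝ) < (k.factorial : ℝ) := by positivity
        calc Real.exp (-(2*ε)*t) * ((k.factorial : ℝ)⁻¹ * t^k * ‖N ^ k *ᵥ v‖)
            = (k.factorial : ℝ)⁻¹ * ‖N ^ k *ᵥ v‖ * (t^k * Real.exp (-(2*ε)*t)) := by ring
          _ ≤ (k.factorial : ℝ)⁻¹ * ‖N ^ k *ᵥ v‖ * (((k.factorial : ℝ) / ε ^ k) * Real.exp (-ε*t)) := by
              refine mul_le_mul_of_nonneg_left h3 (by positivity)
          _ = ε⁻¹ ^ k * ‖N ^ k *ᵥ v‖ * Real.exp (-ε * t) := by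
              field_simp
              rw [mul_assoc, ← mul_pow, mul_one_div_cancel hε.ne', one_pow, mul_one]
    _ = (∑ k ∈ Finset.range m, ε⁻¹ ^ k * ‖N ^ k *ᵥ v‖) * Real.exp (-ε * t) := by
        rw [Finset.sum_mul]

lemma vec_decay {d : ℕ} (A : Matrix (Fin d) (Fin d) ℂ) {ε : ℝ} (hε : 0 < ε)
    (hspec : ∀ μ ∈ spectrum ℂ A, μ.re ≤ -(2*ε)) (x : Fin d → ℂ) :
    ∃ C : ℝ, 0 ≤ C ∧ ∀ t : ℝ, 0 ≤ t → ‖exp (t • A) *ᵥ x‖ ≤ C * Real.exp (-ε * t) := by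
  set f : Module.End ℂ (Fin d → ℂ) := Matrix.toLinAlgEquiv' A with hf
  have hx : x ∈ ⨆ μ : ℂ, f.maxGenEigenspace μ := by
    rw [Module.End.iSup_maxGenEigenspace_eq_top]; trivial
  obtain ⟨c, hc, hcsum⟩ := (Submodule.mem_iSup_iff_exists_finsupp _ _).mp hx
  have hsingle : ∀ μ ∈ c.support, ∃ C : ℝ, 0 ≤ C ∧ ∀ t : ℝ, 0 ≤ t →
      ‖exp (t • A) *ᵥ (c μ)‖ ≤ C * Real.exp (-ε * t) := by
    intro μ hμ
    have hvne : c μ ≠ 0 := Finsupp.mem_support_iff.mp hμ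
    have hμs : μ ∈ spectrum ℂ A := by
      have h1 : f.HasUnifEigenvalue μ ⊤ := by
        intro hbot
        exact hvne (by simpa [hbot] using (hc μ : c μ ∈ f.maxGenEigenspace μ))
      have h2 := (Module.End.hasUnifEigenvalue_iff_hasUnifEigenvalue_one
        (k := ⊤) (by norm_num)).mp h1
      have h3 := Module.End.hasUnifEigenvalue_iff_mem_spectrum.mp h2
      rwa [hf, AlgEquiv.spectrum_eq] at h3
    exact vec_decay_single A hε (hspec μ hμs) (hc μ)
  choose! C hC0 hC using hsingle
  refine ⟨∑ μ ∈ c.support, C μ, Finset.sum_nonneg (fun μ hμ => hC0 μ hμ), fun t ht => ?_⟩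
  have hxs : exp (t • A) *ᵥ x = ∑ μ ∈ c.support, exp (t • A) *ᵥ (c μ) := by
    conv_lhs => rw [← hcsum]
    rw [Finsupp.sum]
    simp only [← Matrix.toLinAlgEquiv'_apply, map_sum]
  rw [hxs]
  calc ‖∑ μ ∈ c.support, exp (t • A) *ᵥ (c μ)‖
      ≤ ∑ μ ∈ c.support, ‖exp (t • A) *ᵥ (c μ)‖ := norm_sum_le _ _
    _ ≤ ∑ μ ∈ c.support, C μ * Real.exp (-ε * t) :=
        Finset.sum_le_sum fun μ hμ => hC μ hμ t ht
    _ = (∑ μ ∈ c.support, C μ) * Real.exp (-ε * t) := by rw [Finset.sum_mul]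

lemma exp_map_ofReal {d : ℕ} (B : Matrix (Fin d) (Fin d) ℝ) :
    (exp B).map Complex.ofReal = exp (B.map Complex.ofReal) := by
  letI : SeminormedRing (Matrix (Fin d) (Fin d) ℝ) := Matrix.linftyOpSemiNormedRing
  letI : NormedRing (Matrix (Fin d) (Fin d) ℝ) := Matrix.linftyOpNormedRing
  letI : NormedAlgebra ℝ (Matrix (Fin d) (Fin d) ℝ) := Matrix.linftyOpNormedAlgebra
  letI : SeminormedRing (Matrix (Fin d) (Fin d) ℂ) := Matrix.linftyOpSemiNormedRing
  letI : NormedRing (Matrix (Fin d) (Fin d) ℂ) := Matrix.linftyOpNormedRing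
  letI : NormedAlgebra ℂ (Matrix (Fin d) (Fin d) ℂ) := Matrix.linftyOpNormedAlgebra
  letI : NormedAlgebra ℝ (Matrix (Fin d) (Fin d) ℂ) := Matrix.linftyOpNormedAlgebra
  letI : NormedAlgebra ℚ (Matrix (Fin d) (Fin d) ℝ) := Matrix.linftyOpNormedAlgebra
  letI : NormedAlgebra ℚ (Matrix (Fin d) (Fin d) ℂ) := Matrix.linftyOpNormedAlgebra
  set φ : Matrix (Fin d) (Fin d) ℝ →ₐ[ℝ] Matrix (Fin d) (Fin d) ℂ :=
    AlgHom.mapMatrix (Algebra.ofId ℝ ℂ) with hφ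
  have hcont : @Continuous _ _ UniformSpace.toTopologicalSpace UniformSpace.toTopologicalSpace φ := by
    exact Continuous.matrix_map continuous_id Complex.continuous_ofReal
  have h := map_exp φ hcont B
  have hmm : ∀ C : Matrix (Fin d) (Fin d) ℝ, φ C = C.map Complex.ofReal := by
    intro C; rfl
  rw [hmm] at h
  exact h

lemma entry_decay {d : ℕ} (M : Matrix (Fin d) (Fin d) ℝ)
    (hH : ∀ μ ∈ spectrum ℂ (M.map Complex.ofReal), μ.re < 0) :
    ∃ ε : ℝ, 0 < ε ∧ ∃ C : ℝ, 0 ≤ C ∧ ∀ t : ℝ, 0 ≤ t → ∀ i j,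
      |(exp (t • M)) i j| ≤ C * Real.exp (-ε * t) := by
  set A := M.map Complex.ofReal with hA
  obtain ⟨ε, hε, hspec⟩ := exists_eps_of_hurwitz A hH
  have hcol : ∀ j : Fin d, ∃ C : ℝ, 0 ≤ C ∧ ∀ t : ℝ, 0 ≤ t →
      ‖exp (t • A) *ᵥ Pi.single j 1‖ ≤ C * Real.exp (-ε * t) :=
    fun j => vec_decay A hε hspec _
  choose C hC0 hC using hcol
  refine ⟨ε, hε, ∑ j, C j, Finset.sum_nonneg (fun j _ => hC0 j), fun t ht i j => ?_⟩
  have hmap : (exp (t • M)).map Complex.ofReal = exp (t • A) := by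
    rw [exp_map_ofReal]
    congr 1
    ext i j
    simp [hA, Matrix.map_apply]
  have hentry : ((exp (t • M)) i j : ℂ) = exp (t • A) i j := by
    rw [← hmap]; rfl
  have h1 : |(exp (t • M)) i j| = ‖(exp (t • A)) i j‖ := by
    rw [← hentry, Complex.norm_real, Real.norm_eq_abs]
  have h2 : exp (t • A) i j = (exp (t • A) *ᵥ Pi.single j 1) i := by
    simp [Matrix.mulVec_single]
  calc |(exp (t • M)) i j| = ‖(exp (t • A) *ᵥ Pi.single j 1) i‖ := by rw [h1, h2]
    _ ≤ ‖exp (t • A) *ᵥ Pi.single j 1‖ := norm_le_pi_norm _ i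
    _ ≤ C j * Real.exp (-ε * t) := hC j t ht
    _ ≤ (∑ j, C j) * Real.exp (-ε * t) := by
        refine mul_le_mul_of_nonneg_right ?_ (Real.exp_nonneg _)
        exact Finset.single_le_sum (fun j _ => hC0 j) (Finset.mem_univ j)

/-- If `M` is Hurwitz (all eigenvalues have strictly negative real part), then for
every symmetric positive semidefinite `U`, the Lyapunov equation
`U + M V + V Mᵀ = 0` has the unique solution
`V = ∫_0^∞ e^{Mt} U e^{Mᵀ t} dt` (entrywise integral), which is symmetric
positive semidefinite. -/
theorem lyapunov_solution (d : ℕ) (M U : Matrix (Fin d) (Fin d) ℝ)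
    (hHurwitz : ∀ μ ∈ spectrum ℂ (M.map (Complex.ofReal)), μ.re < 0)
    (hU : U.PosSemidef) :
    letI V : Matrix (Fin d) (Fin d) ℝ :=
      Matrix.of fun i j =>
        ∫ t in Set.Ioi (0 : ℝ),
          ((NormedSpace.exp (t • M)) * U * (NormedSpace.exp (t • Mᵀ))) i j
    U + M * V + V * Mᵀ = 0 ∧ V.PosSemidef ∧
      ∀ V' : Matrix (Fin d) (Fin d) ℝ, U + M * V' + V' * Mᵀ = 0 → V' = V := by
  letI : SeminormedRing (Matrix (Fin d) (Fin d) ℝ) := Matrix.linftyOpSemiNormedRing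
  letI : NormedRing (Matrix (Fin d) (Fin d) ℝ) := Matrix.linftyOpNormedRing
  letI : NormedAlgebra ℝ (Matrix (Fin d) (Fin d) ℝ) := Matrix.linftyOpNormedAlgebra
  letI : NormedAlgebra ℚ (Matrix (Fin d) (Fin d) ℝ) := Matrix.linftyOpNormedAlgebra
  set e : ℝ → Matrix (Fin d) (Fin d) ℝ := fun t => exp (t • M) with he
  set g : ℝ → Matrix (Fin d) (Fin d) ℝ := fun t => exp (t • Mᵀ) with hgdef
  set V : Matrix (Fin d) (Fin d) ℝ := Matrix.of fun i j => ∫ t in Set.Ioi (0:ℝ), (e t * U * g t) i j with hV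
  show U + M * V + V * Mᵀ = 0 ∧ V.PosSemidef ∧
      ∀ V' : Matrix (Fin d) (Fin d) ℝ, U + M * V' + V' * Mᵀ = 0 → V' = V
  -- basic facts
  have hg : ∀ t : ℝ, g t = (e t)ᵀ := by
    intro t
    show exp (t • Mᵀ) = (exp (t • M))ᵀ
    rw [← Matrix.transpose_smul, Matrix.exp_transpose]
  have he0 : e 0 = 1 := by rw [he]; simp [NormedSpace.exp_zero]
  have hg0 : g 0 = 1 := by rw [hg, he0, Matrix.transpose_one]
  obtain ⟨ε, hε, C, hC0, hC⟩ := entry_decay M hHurwitz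
  have hCg : ∀ t : ℝ, 0 ≤ t → ∀ i j, |g t i j| ≤ C * Real.exp (-ε * t) := by
    intro t ht i j
    rw [hg]
    exact hC t ht j i
  -- the general product function
  set F : Matrix (Fin d) (Fin d) ℝ → ℝ → Matrix (Fin d) (Fin d) ℝ :=
    fun B t => e t * B * g t with hF
  set K : Matrix (Fin d) (Fin d) ℝ → ℝ := fun B => C^2 * ∑ k, ∑ l, |B k l| with hK
  have hK0 : ∀ B, 0 ≤ K B := by
    intro B
    refine mul_nonneg (by positivity) ?_
    exact Finset.sum_nonneg fun k _ => Finset.sum_nonneg fun l _ => abs_nonneg _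
  have hbound : ∀ B, ∀ t : ℝ, 0 ≤ t → ∀ i j, |F B t i j| ≤ K B * Real.exp (-ε * t) := by
    intro B t ht i j
    have hE1 : Real.exp (-ε * t) ≤ 1 := Real.exp_le_one_iff.mpr (by nlinarith)
    have hE0 : 0 ≤ Real.exp (-ε * t) := Real.exp_nonneg _
    have hentry : F B t i j = ∑ k, ∑ l, e t i k * B k l * g t l j := by
      simp only [hF, Matrix.mul_apply, Finset.sum_mul]
      rw [Finset.sum_comm]
    rw [hentry]
    calc |∑ k, ∑ l, e t i k * B k l * g t l j|
        ≤ ∑ k, ∑ l, |e t i k * B k l * g t l j| := by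
          refine (Finset.abs_sum_le_sum_abs _ _).trans ?_
          exact Finset.sum_le_sum fun k _ => Finset.abs_sum_le_sum_abs _ _
      _ ≤ ∑ k, ∑ l, (C * Real.exp (-ε * t)) * |B k l| * (C * Real.exp (-ε * t)) := by
          refine Finset.sum_le_sum fun k _ => Finset.sum_le_sum fun l _ => ?_
          rw [abs_mul, abs_mul]
          refine mul_le_mul (mul_le_mul (hC t ht i k) le_rfl (abs_nonneg _) ?_) (hCg t ht l j)
            (abs_nonneg _) ?_
          · positivity
          · positivity
      _ = (C^2 * ∑ k, ∑ l, |B k l|) * (Real.exp (-ε * t) * Real.exp (-ε * t)) := by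
          rw [Finset.mul_sum, Finset.sum_mul]
          refine Finset.sum_congr rfl fun k _ => ?_
          rw [Finset.mul_sum, Finset.sum_mul]
          refine Finset.sum_congr rfl fun l _ => ?_
          ring
      _ ≤ K B * Real.exp (-ε * t) := by
          rw [hK]
          refine mul_le_mul_of_nonneg_left ?_ ?_
          · nlinarith
          · refine mul_nonneg (by positivity) ?_
            exact Finset.sum_nonneg fun k _ => Finset.sum_nonneg fun l _ => abs_nonneg _
  -- continuity and integrability
  have heC : Continuous e := by
    exact exp_continuous.comp (continuous_id.smul continuous_const)
  have hgC : Continuous g := by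
    exact exp_continuous.comp (continuous_id.smul continuous_const)
  have hFC : ∀ B (i j : Fin d), Continuous fun t => F B t i j := by
    intro B i j
    have h1 : Continuous fun t => F B t := (heC.mul continuous_const).mul hgC
    exact h1.matrix_elem i j
  have hFInt : ∀ B (i j : Fin d), IntegrableOn (fun t => F B t i j) (Set.Ioi 0) := by
    intro B i j
    refine Integrable.mono' (g := fun t => K B * Real.exp (-ε * t))
      ((exp_neg_integrableOn_Ioi 0 hε).const_mul (K B))
      ((hFC B i j).aestronglyMeasurable.restrict) ?_
    rw [ae_restrict_iff' measurableSet_Ioi]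
    exact ae_of_all _ fun t ht => by
      rw [Real.norm_eq_abs]
      exact hbound B t (le_of_lt ht) i j
  -- derivatives
  have hFD : ∀ B (t : ℝ), HasDerivAt (F B) (M * F B t + F B t * Mᵀ) t := by
    intro B t
    have h1 : HasDerivAt (fun u : ℝ => exp (u • M)) (M * e t) t :=
      hasDerivAt_exp_smul_const' M t
    have h2 : HasDerivAt (fun u : ℝ => exp (u • Mᵀ)) (g t * Mᵀ) t :=
      hasDerivAt_exp_smul_const Mᵀ t
    have h3 := (h1.mul_const B).mul h2
    convert h3 using 1
    show M * (e t * B * g t) + (e t * B * g t) * Mᵀ = M * e t * B * g t + e t * B * (g t * Mᵀ)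
    noncomm_ring
    all_goals rfl
  have hFDe : ∀ B (i j : Fin d) (t : ℝ),
      HasDerivAt (fun t => F B t i j) ((M * F B t + F B t * Mᵀ) i j) t := by
    intro B i j t
    let E : Matrix (Fin d) (Fin d) ℝ →ₗ[ℝ] ℝ :=
      { toFun := fun A => A i j, map_add' := fun _ _ => rfl, map_smul' := fun _ _ => rfl }
    exact (LinearMap.toContinuousLinearMap E).hasFDerivAt.comp_hasDerivAt t (hFD B t)
  -- limits at infinity
  have hFT : ∀ B (i j : Fin d), Tendsto (fun t => F B t i j) atTop (nhds 0) := by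
    intro B i j
    have hg0' : Tendsto (fun t : ℝ => K B * Real.exp (-ε * t)) atTop (nhds 0) := by
      have h1 : Tendsto (fun t : ℝ => -ε * t) atTop atBot :=
        Filter.Tendsto.const_mul_atTop_of_neg (by linarith) tendsto_id
      have h2 := (Real.tendsto_exp_atBot.comp h1).const_mul (K B)
      simpa using h2
    refine squeeze_zero_norm' ?_ hg0'
    filter_upwards [eventually_ge_atTop (0:ℝ)] with t ht
    rw [Real.norm_eq_abs]
    exact hbound B t ht i j
  -- FTC
  have hDint : ∀ B (i j : Fin d),
      IntegrableOn (fun t => (M * F B t + F B t * Mᵀ) i j) (Set.Ioi 0) := by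
    intro B i j
    have hfun : (fun t => (M * F B t + F B t * Mᵀ) i j)
        = fun t => (∑ k, M i k * F B t k j) + (∑ k, F B t i k * Mᵀ k j) := by
      funext t
      simp [Matrix.add_apply, Matrix.mul_apply]
    rw [hfun]
    exact Integrable.add
      (integrable_finset_sum _ fun k _ => (hFInt B k j).const_mul _)
      (integrable_finset_sum _ fun k _ => (hFInt B i k).mul_const _)
  have hFTC : ∀ B (i j : Fin d),
      (∫ t in Set.Ioi (0:ℝ), (M * F B t + F B t * Mᵀ) i j) = -(B i j) := by
    intro B i j
    have h0 : F B 0 = B := by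
      show e 0 * B * g 0 = B
      rw [he0, hg0, Matrix.one_mul, Matrix.mul_one]
    have h := integral_Ioi_of_hasDerivAt_of_tendsto' (a := (0:ℝ))
      (f := fun t => F B t i j) (fun t _ => hFDe B i j t) (hDint B i j) (hFT B i j)
    rw [h]
    show 0 - F B 0 i j = -B i j
    rw [h0]
    ring
  -- the key identity
  have hMW : ∀ B : Matrix (Fin d) (Fin d) ℝ,
      M * (Matrix.of fun i j => ∫ t in Set.Ioi (0:ℝ), F B t i j)
      + (Matrix.of fun i j => ∫ t in Set.Ioi (0:ℝ), F B t i j) * Mᵀ = -B := by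
    intro B
    set W' : Matrix (Fin d) (Fin d) ℝ := Matrix.of fun i j => ∫ t in Set.Ioi (0:ℝ), F B t i j
      with hW'
    ext i j
    have h1 : (M * W') i j = ∫ t in Set.Ioi (0:ℝ), ∑ k, M i k * F B t k j := by
      rw [Matrix.mul_apply, integral_finset_sum _ (fun k _ => (hFInt B k j).const_mul _)]
      refine Finset.sum_congr rfl fun k _ => ?_
      rw [integral_const_mul]
      rfl
    have h2 : (W' * Mᵀ) i j = ∫ t in Set.Ioi (0:ℝ), ∑ k, F B t i k * Mᵀ k j := by
      rw [Matrix.mul_apply, integral_finset_sum _ (fun k _ => (hFInt B i k).mul_const _)]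
      refine Finset.sum_congr rfl fun k _ => ?_
      rw [integral_mul_const]
      rfl
    have h3 : (M * W' + W' * Mᵀ) i j
        = ∫ t in Set.Ioi (0:ℝ), (M * F B t + F B t * Mᵀ) i j := by
      rw [Matrix.add_apply, h1, h2,
        ← integral_add (integrable_finset_sum _ fun k _ => (hFInt B k j).const_mul _)
          (integrable_finset_sum _ fun k _ => (hFInt B i k).mul_const _)]
      refine integral_congr_ae (ae_of_all _ fun t => ?_)
      simp [Matrix.add_apply, Matrix.mul_apply]
    rw [h3, hFTC B i j]
    simp
  -- the equation
  have heqn : U + M * V + V * Mᵀ = 0 := by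
    have h := hMW U
    have hVU : V = Matrix.of fun i j => ∫ t in Set.Ioi (0:ℝ), F U t i j := rfl
    rw [← hVU] at h
    rw [add_assoc, h]
    simp
  refine ⟨heqn, ?_, ?_⟩
  · -- positive semidefinite
    have hconjT : ∀ A : Matrix (Fin d) (Fin d) ℝ, Aᴴ = Aᵀ := by
      intro A
      ext i j
      simp [Matrix.conjTranspose_apply]
    have hUt : Uᵀ = U := by rw [← hconjT]; exact hU.1
    have hFsymm : ∀ t : ℝ, (F U t)ᵀ = F U t := by
      intro t
      show (e t * U * g t)ᵀ = e t * U * g t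
      calc (e t * U * g t)ᵀ = (g t)ᵀ * ((e t * U)ᵀ) := Matrix.transpose_mul _ _
        _ = (g t)ᵀ * (Uᵀ * (e t)ᵀ) := by rw [Matrix.transpose_mul]
        _ = e t * (U * g t) := by rw [hg, Matrix.transpose_transpose, hUt]
        _ = e t * U * g t := (Matrix.mul_assoc _ _ _).symm
    refine posSemidef_iff_dotProduct_mulVec.mpr ⟨?_, ?_⟩
    · -- Hermitian
      show Vᴴ = V
      rw [hconjT]
      ext i j
      show (∫ t in Set.Ioi (0:ℝ), F U t j i) = ∫ t in Set.Ioi (0:ℝ), F U t i j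
      refine integral_congr_ae (ae_of_all _ fun t => ?_)
      show F U t j i = F U t i j
      conv_rhs => rw [← hFsymm t]
      simp [Matrix.transpose_apply]
    · -- nonnegativity
      intro x
      rw [star_trivial]
      have hPSDt : ∀ t : ℝ, (F U t).PosSemidef := by
        intro t
        have h1 := hU.mul_mul_conjTranspose_same (e t)
        have h2 : e t * U * (e t)ᴴ = F U t := by
          rw [hconjT, ← hg]
        rwa [h2] at h1
      have hInt_i : ∀ i : Fin d, Integrable (fun t => ∑ j, x i * x j * F U t i j)
          ((volume : Measure ℝ).restrict (Set.Ioi 0)) :=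
        fun i => integrable_finset_sum _ fun j _ => ((hFInt U i j).const_mul _)
      have h4 : x ⬝ᵥ V *ᵥ x = ∫ t in Set.Ioi (0:ℝ), ∑ i, ∑ j, x i * x j * F U t i j := by
        have h2 : x ⬝ᵥ V *ᵥ x = ∑ i, ∑ j, x i * x j * (∫ t in Set.Ioi (0:ℝ), F U t i j) := by
          simp only [dotProduct, Matrix.mulVec, Finset.mul_sum]
          refine Finset.sum_congr rfl fun i _ => Finset.sum_congr rfl fun j _ => ?_
          show x i * (V i j * x j) = x i * x j * (∫ t in Set.Ioi (0:ℝ), F U t i j)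
          have : V i j = ∫ t in Set.Ioi (0:ℝ), F U t i j := rfl
          rw [this]
          ring
        rw [h2]
        have hinner : ∀ i : Fin d, (∑ j, x i * x j * (∫ t in Set.Ioi (0:ℝ), F U t i j))
            = ∫ t in Set.Ioi (0:ℝ), ∑ j, x i * x j * F U t i j := by
          intro i
          rw [integral_finset_sum _ (fun j _ => ((hFInt U i j).const_mul _))]
          exact Finset.sum_congr rfl fun j _ => (integral_const_mul _ _).symm
        simp_rw [hinner]
        rw [← integral_finset_sum _ (fun i _ => hInt_i i)]
      rw [h4]
      refine setIntegral_nonneg measurableSet_Ioi fun t _ => ?_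
      have h5 : ∑ i, ∑ j, x i * x j * F U t i j = star x ⬝ᵥ (F U t) *ᵥ x := by
        rw [star_trivial]
        simp only [dotProduct, Matrix.mulVec, Finset.mul_sum]
        refine Finset.sum_congr rfl fun i _ => Finset.sum_congr rfl fun j _ => by ring
      rw [h5]
      exact (hPSDt t).dotProduct_mulVec_nonneg x
  · -- uniqueness
    intro V' hV'
    set W : Matrix (Fin d) (Fin d) ℝ := V' - V with hWdef
    have hWeq : M * W + W * Mᵀ = 0 := by
      have h1 : M * W + W * Mᵀ = (U + M * V' + V' * Mᵀ) - (U + M * V + V * Mᵀ) := by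
        rw [hWdef]
        noncomm_ring
      rw [h1, hV', heqn, sub_zero]
    have hcomm1 : ∀ t : ℝ, M * e t = e t * M := by
      intro t
      exact (((Commute.refl M).smul_right t).exp_right).eq
    have hcomm2 : ∀ t : ℝ, g t * Mᵀ = Mᵀ * g t := by
      intro t
      exact (((Commute.refl Mᵀ).smul_right t).exp_right).eq.symm
    have hzero : ∀ t : ℝ, M * F W t + F W t * Mᵀ = 0 := by
      intro t
      have : M * F W t + F W t * Mᵀ = e t * (M * W + W * Mᵀ) * g t := by
        calc M * F W t + F W t * Mᵀ
            = (M * e t) * (W * g t) + (e t * W) * (g t * Mᵀ) := by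
              show M * (e t * W * g t) + (e t * W * g t) * Mᵀ = _
              noncomm_ring
          _ = (e t * M) * (W * g t) + (e t * W) * (Mᵀ * g t) := by rw [hcomm1, hcomm2]
          _ = e t * (M * W + W * Mᵀ) * g t := by noncomm_ring
      rw [this, hWeq]
      simp
    have hderiv0 : ∀ (i j : Fin d) (t : ℝ), HasDerivAt (fun t => F W t i j) 0 t := by
      intro i j t
      have h := hFDe W i j t
      rwa [hzero t, Matrix.zero_apply] at h
    have hconst : ∀ (i j : Fin d) (t : ℝ), F W t i j = W i j := by
      intro i j t
      have hdiff : Differentiable ℝ (fun t => F W t i j) :=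
        fun s => (hderiv0 i j s).differentiableAt
      have hd0 : ∀ s, deriv (fun t => F W t i j) s = 0 := fun s => (hderiv0 i j s).deriv
      have h := is_const_of_deriv_eq_zero hdiff hd0 t 0
      rw [h]
      show (e 0 * W * g 0) i j = W i j
      rw [he0, hg0, Matrix.one_mul, Matrix.mul_one]
    have hW0 : W = 0 := by
      ext i j
      have h1 : Tendsto (fun t => F W t i j) atTop (nhds 0) := hFT W i j
      have h2 : Tendsto (fun t => F W t i j) atTop (nhds (W i j)) := by
        have : (fun t => F W t i j) = fun _ => W i j := funext (hconst i j)
        rw [this]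
        exact tendsto_const_nhds
      have := tendsto_nhds_unique h2 h1
      simpa using this
    have := sub_eq_zero.mp (hWdef ▸ hW0 : V' - V = 0)
    exact this
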